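/- Let V be a finite-dimensional real normed vector space and B : V → V → ℝ a symmetric bilinear form. Assume V admits a direct sum decomposition V = P⁺ ⊕ P⁻ into B-orthogonal subspaces with dim P⁺ = 3, B positive definite on P⁺ and negative definite on P⁻. Let Λ ⊆ V be the ℤ-span of some ℝ-basis of V. Then the set of continuous linear maps f : ℝ³ → V such that (i) the bilinear form (x,y) ↦ B(f(x), f(y)) on ℝ³ is positive definite, and (ii) for every δ ∈ Λ with B(δ,δ) = -2 there exists z ∈ ℝ³ with B(δ, f(z)) ≠ 0, is an open subset of the space of continuous linear maps ℝ³ → V with the operator norm. -/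

import Mathlib

open Module

private lemma toCLM₂ {V : Type*} [NormedAddCommGroup V] [NormedSpace ℝ V]
    [FiniteDimensional ℝ V] (B : V →ₗ[ℝ] V →ₗ[ℝ] ℝ) :
    ∃ B' : V →L[ℝ] V →L[ℝ] ℝ, ∀ u v, B' u v = B u v := by
  refine ⟨LinearMap.toContinuousLinearMap
    { toFun := fun v => LinearMap.toContinuousLinearMap (B v)
      map_add' := by intro x y; ext z; simp
      map_smul' := by intro c x; ext z; simp }, fun u v => ?_⟩
  simp

private lemma quad_pos_bound {E : Type*} [NormedAddCommGroup E] [NormedSpace ℝ E]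
    [FiniteDimensional ℝ E] (q : E → ℝ) (hq : Continuous q)
    (hhom : ∀ (c : ℝ) (x : E), q (c • x) = c ^ 2 * q x)
    (hpos : ∀ x : E, x ≠ 0 → 0 < q x) :
    ∃ m : ℝ, 0 < m ∧ ∀ x : E, m * ‖x‖ ^ 2 ≤ q x := by
  have hq0 : q 0 = 0 := by
    have := hhom 0 0
    simpa using this
  rcases subsingleton_or_nontrivial E with hE | hE
  · exact ⟨1, one_pos, fun x => by rw [Subsingleton.elim x 0]; simp [hq0]⟩
  · obtain ⟨x₀, hx₀, hmin⟩ := (isCompact_sphere (0 : E) 1).exists_isMinOn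
      (NormedSpace.sphere_nonempty.mpr one_pos.le) hq.continuousOn
    have hx₀n : ‖x₀‖ = 1 := by simpa using hx₀
    have hx₀0 : x₀ ≠ 0 := by intro h; rw [h] at hx₀n; simp at hx₀n
    refine ⟨q x₀, hpos x₀ hx₀0, fun x => ?_⟩
    rcases eq_or_ne x 0 with rfl | hx
    · simp [hq0]
    · have hxn : (0 : ℝ) < ‖x‖ := norm_pos_iff.mpr hx
      have hmem : ‖x‖⁻¹ • x ∈ Metric.sphere (0 : E) 1 := by
        simp [norm_smul, abs_of_pos (inv_pos.mpr hxn), inv_mul_cancel₀ hxn.ne']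
      have h1 : q x₀ ≤ q (‖x‖⁻¹ • x) := hmin hmem
      rw [hhom] at h1
      rw [inv_pow] at h1
      have := mul_le_mul_of_nonneg_right h1 (by positivity : (0:ℝ) ≤ ‖x‖ ^ 2)
      calc q x₀ * ‖x‖ ^ 2 ≤ (‖x‖ ^ 2)⁻¹ * q x * ‖x‖ ^ 2 := this
        _ = q x := by field_simp

private lemma abs_mul_bound {C u v u' v' X : ℝ} (hC : 0 ≤ C) (hu : 0 ≤ u) (hv : 0 ≤ v)
    (hu' : u ≤ u') (hv' : v ≤ v') (h : |X| ≤ C * u * v) : |X| ≤ C * u' * v' := by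
  have s1 : C * u * v ≤ C * u' * v :=
    mul_le_mul_of_nonneg_right (mul_le_mul_of_nonneg_left hu' hC) hv
  have s2 : C * u' * v ≤ C * u' * v' :=
    mul_le_mul_of_nonneg_left hv' (mul_nonneg hC (le_trans hu hu'))
  linarith

private lemma arith_pos {m CB Cf dn nx Bff Bfd Bdf Bdd : ℝ}
    (hCB : 0 ≤ CB) (hCf : 0 ≤ Cf) (hdn : 0 ≤ dn) (hnx : 0 < nx) (hm0 : 0 < m)
    (hq : m * nx ^ 2 ≤ Bff)
    (h1 : |Bfd| ≤ CB * Cf * dn * nx ^ 2) (h2 : |Bdf| ≤ CB * Cf * dn * nx ^ 2)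
    (h3 : |Bdd| ≤ CB * dn ^ 2 * nx ^ 2)
    (hd1 : dn ≤ 1) (hd2 : dn * (2 * CB * Cf + CB + 1) ≤ m) :
    0 < Bff + Bfd + Bdf + Bdd := by
  have hnx2 : 0 < nx ^ 2 := by positivity
  have hdd : dn ^ 2 ≤ dn := by nlinarith
  have e1 := abs_le.mp h1
  have e2 := abs_le.mp h2
  have e3 := abs_le.mp h3
  rcases eq_or_lt_of_le hdn with h | h
  · have hz : dn = 0 := h.symm
    subst hz
    simp only [mul_zero, zero_mul] at e1 e2 e3 ⊢
    nlinarith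
  · have s1 : CB * dn ^ 2 * nx ^ 2 ≤ CB * dn * nx ^ 2 := by
      nlinarith [mul_le_mul_of_nonneg_right hdd (mul_nonneg hCB hnx2.le)]
    nlinarith [mul_le_mul_of_nonneg_right hd2 hnx2.le]

private lemma arith_lt {A c : ℝ} (hA : 0 ≤ A) (hc : 0 < c) : A * (c / (2 * (A + 1))) < c := by
  have h1 : A / (2 * (A + 1)) < 1 := by
    rw [div_lt_one (by positivity)]
    linarith
  calc A * (c / (2 * (A + 1))) = c * (A / (2 * (A + 1))) := by ring
    _ < c * 1 := by exact mul_lt_mul_of_pos_left h1 hc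
    _ = c := mul_one c

private lemma arith_eps {mc K : ℝ} (hmc : 0 ≤ mc) (hK : 0 ≤ K) :
    (mc / (2 * (K + 1))) * K ≤ mc / 2 := by
  have h1 : K / (K + 1) ≤ 1 := by
    rw [div_le_one (by positivity)]; linarith
  calc (mc / (2 * (K + 1))) * K = (mc / 2) * (K / (K + 1)) := by
        field_simp
    _ ≤ (mc / 2) * 1 := mul_le_mul_of_nonneg_left h1 (by positivity)
    _ = mc / 2 := mul_one _

private lemma arith_wn {m Cf nw nz Bww : ℝ} (hm0 : 0 < m) (hCf : 0 ≤ Cf)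
    (hnw : 0 ≤ nw) (hnz : 0 ≤ nz) (h1 : nw ≤ Cf * nz) (h2 : m * nz ^ 2 ≤ Bww) :
    m * nw ^ 2 ≤ Cf ^ 2 * Bww := by
  nlinarith [mul_le_mul h1 h1 hnw (mul_nonneg hCf hnz)]

private lemma arith_sq {a nw nv : ℝ} (ha : a ≤ nw + nv) (h0 : 0 ≤ a) :
    a ^ 2 ≤ 2 * nw ^ 2 + 2 * nv ^ 2 := by
  nlinarith [sq_nonneg (nw - nv)]

private lemma arith_key {m cm CB CT Cf ε₀ a nw nv Bww : ℝ}
    (hm0 : 0 < m) (hcm0 : 0 < cm) (hCB : 0 ≤ CB) (hCT : 0 ≤ CT) (hCf : 0 ≤ Cf)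
    (hε₀ : 0 ≤ ε₀)
    (hww0 : 0 ≤ Bww) (hwwle : Bww ≤ CB * ε₀ * CT * a ^ 2)
    (hwn : m * nw ^ 2 ≤ Cf ^ 2 * Bww) (hvn : cm * nv ^ 2 ≤ 2 + Bww)
    (han : a ^ 2 ≤ 2 * nw ^ 2 + 2 * nv ^ 2)
    (hεb : ε₀ * (CB * CT * (2 * cm * Cf ^ 2 + 2 * m)) ≤ m * cm / 2) :
    cm * a ^ 2 ≤ 8 := by
  have h1 : m * cm * a ^ 2 ≤ 2 * cm * (m * nw ^ 2) + 2 * m * (cm * nv ^ 2) := by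
    nlinarith [mul_le_mul_of_nonneg_left han (mul_nonneg hm0.le hcm0.le)]
  have h2 : 2 * cm * (m * nw ^ 2) ≤ 2 * cm * (Cf ^ 2 * Bww) :=
    mul_le_mul_of_nonneg_left hwn (by positivity)
  have h3 : 2 * m * (cm * nv ^ 2) ≤ 2 * m * (2 + Bww) :=
    mul_le_mul_of_nonneg_left hvn (by positivity)
  have h4 : (2 * cm * Cf ^ 2 + 2 * m) * Bww ≤ (2 * cm * Cf ^ 2 + 2 * m) * (CB * ε₀ * CT * a ^ 2) :=
    mul_le_mul_of_nonneg_left hwwle (by positivity)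
  have h5 : (2 * cm * Cf ^ 2 + 2 * m) * (CB * ε₀ * CT * a ^ 2) ≤ (m * cm / 2) * a ^ 2 := by
    have h6 := mul_le_mul_of_nonneg_right hεb (sq_nonneg a)
    nlinarith [sq_nonneg a]
  have h7 : m * (cm * a ^ 2) ≤ m * 8 := by nlinarith
  exact le_of_mul_le_mul_left h7 hm0

set_option maxHeartbeats 1000000 in
/-- Openness of the frame-bundle version of `Gr^{+,∘}`: linear maps `f : ℝ³ → V` pulling `B`
back to a positive definite form and whose image is orthogonal to no `(-2)`-class of the
lattice `Λ` form an open set in the operator norm. -/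
theorem stmt9 (V : Type*) [NormedAddCommGroup V] [NormedSpace ℝ V] [FiniteDimensional ℝ V]
    (B : V →ₗ[ℝ] V →ₗ[ℝ] ℝ) (hsymm : ∀ x y, B x y = B y x)
    (Pp Pm : Submodule ℝ V) (hcompl : IsCompl Pp Pm)
    (horth : ∀ x ∈ Pp, ∀ y ∈ Pm, B x y = 0)
    (hdimPp : Module.finrank ℝ Pp = 3)
    (hpos : ∀ x ∈ Pp, x ≠ 0 → 0 < B x x)
    (hneg : ∀ y ∈ Pm, y ≠ 0 → B y y < 0)
    (b : Basis (Fin (Module.finrank ℝ V)) ℝ V)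
    (Λ : Set V) (hΛ : Λ = (Submodule.span ℤ (Set.range b) : Set V)) :
    IsOpen {f : EuclideanSpace ℝ (Fin 3) →L[ℝ] V |
      (∀ x : EuclideanSpace ℝ (Fin 3), x ≠ 0 → 0 < B (f x) (f x)) ∧
      (∀ δ ∈ Λ, B δ δ = -2 → ∃ z : EuclideanSpace ℝ (Fin 3), B δ (f z) ≠ 0)} := by
  obtain ⟨B', hB'⟩ := toCLM₂ B
  set CB := ‖B'‖ with hCB
  have hCB0 : 0 ≤ CB := hCB ▸ norm_nonneg B'
  have hBle : ∀ u v : V, |B u v| ≤ CB * ‖u‖ * ‖v‖ := by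
    intro u v
    rw [← hB' u v, ← Real.norm_eq_abs]
    exact B'.le_opNorm₂ u v
  rw [Metric.isOpen_iff]
  rintro f ⟨hf1, hf2⟩
  set E := EuclideanSpace ℝ (Fin 3) with hE
  -- injectivity of f
  have hinj : Function.Injective (f : E →ₗ[ℝ] V) := by
    rw [← LinearMap.ker_eq_bot, LinearMap.ker_eq_bot']
    intro x hx
    by_contra hx0
    have := hf1 x hx0
    have hfx : f x = 0 := hx
    rw [hfx] at this
    simp at this
  set F : E →ₗ[ℝ] V := (f : E →ₗ[ℝ] V) with hF
  set W := LinearMap.range F with hW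
  have hdimE : finrank ℝ E = 3 := by show finrank ℝ (EuclideanSpace ℝ (Fin 3)) = 3; simp
  have hdimW : finrank ℝ W = 3 := by
    rw [hW, LinearMap.finrank_range_of_inj hinj, hdimE]
  -- the B-orthogonal complement of the image
  set L : V →ₗ[ℝ] (E →ₗ[ℝ] ℝ) :=
    { toFun := fun v => (B v) ∘ₗ F
      map_add' := by intro x y; ext z; simp
      map_smul' := by intro c x; ext z; simp } with hL
  set Wm := LinearMap.ker L with hWm
  have hWmmem : ∀ v : V, v ∈ Wm ↔ ∀ z : E, B v (F z) = 0 := by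
    intro v
    rw [hWm, LinearMap.mem_ker, hL]
    constructor
    · intro h z
      have := congrArg (fun g => g z) h
      simpa using this
    · intro h
      ext z
      simpa using h z
  -- dimension of Wm
  have hdimWm : 3 + finrank ℝ Wm ≥ finrank ℝ V := by
    rw [hWm]
    have h1 := LinearMap.finrank_range_add_finrank_ker L
    have h2 : finrank ℝ (LinearMap.range L) ≤ 3 := by
      have := Submodule.finrank_le (LinearMap.range L)
      have h3 : finrank ℝ (E →ₗ[ℝ] ℝ) = 3 := by
        rw [Module.finrank_linearMap, hdimE]; simp
      omega
    omega
  -- W ∩ Wm = ⊥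
  have hdisj : W ⊓ Wm = ⊥ := by
    rw [Submodule.eq_bot_iff]
    rintro v ⟨hvW, hvWm⟩
    obtain ⟨x, rfl⟩ := hvW
    by_contra hv0
    have hx0 : x ≠ 0 := by rintro rfl; simp at hv0
    exact (hf1 x hx0).ne' ((hWmmem _).mp hvWm x)
  have hWcompl : IsCompl W Wm := by
    constructor
    · exact disjoint_iff.mpr hdisj
    · rw [codisjoint_iff]
      apply Submodule.eq_top_of_finrank_eq
      have := Submodule.finrank_sup_add_finrank_inf_eq W Wm
      rw [hdisj] at this
      simp only [finrank_bot] at this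
      have h4 := Submodule.finrank_le (W ⊔ Wm)
      omega
  -- B is negative definite on Wm
  have hnegWm : ∀ v ∈ Wm, v ≠ 0 → B v v < 0 := by
    intro v hvWm hv0
    by_contra hge
    push_neg at hge
    have hvnW : v ∉ W := by
      intro hvW
      obtain ⟨x, rfl⟩ := hvW
      have hx0 : x ≠ 0 := by rintro rfl; simp at hv0
      exact (hf1 x hx0).ne' ((hWmmem _).mp hvWm x)
    set U := W ⊔ (ℝ ∙ v) with hU
    have hWU : W < U := by
      refine lt_of_le_of_ne le_sup_left (fun h => hvnW ?_)
      rw [h]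
      exact Submodule.mem_sup_right (Submodule.mem_span_singleton_self v)
    have hdimU : 4 ≤ finrank ℝ U := by
      have := Submodule.finrank_lt_finrank_of_lt hWU
      omega
    have hdimPm : 3 + finrank ℝ Pm = finrank ℝ V := by
      have := Submodule.finrank_add_eq_of_isCompl hcompl
      omega
    have hinf : U ⊓ Pm ≠ ⊥ := by
      intro hbot
      have h5 := Submodule.finrank_sup_add_finrank_inf_eq U Pm
      rw [hbot] at h5
      simp only [finrank_bot] at h5
      have h6 := Submodule.finrank_le (U ⊔ Pm)
      omega
    obtain ⟨u, huUPm, hu0⟩ := Submodule.exists_mem_ne_zero_of_ne_bot hinf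
    obtain ⟨huU, huPm⟩ := huUPm
    obtain ⟨w, hwW, s, hs, rfl⟩ := Submodule.mem_sup.mp huU
    obtain ⟨t, rfl⟩ := Submodule.mem_span_singleton.mp hs
    obtain ⟨x, rfl⟩ := hwW
    have hBu : B (F x + t • v) (F x + t • v) = B (F x) (F x) + t ^ 2 * B v v := by
      have h1 : B v (F x) = 0 := (hWmmem _).mp hvWm x
      have h2 : B (F x) v = 0 := by rw [hsymm]; exact h1
      simp [map_add, map_smul, h1, h2]
      ring
    have hFx : 0 ≤ B (F x) (F x) := by
      rcases eq_or_ne x 0 with rfl | hx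
      · simp
      · exact (hf1 x hx).le
    have hge0 : 0 ≤ B (F x + t • v) (F x + t • v) := by
      rw [hBu]; positivity
    exact absurd (hneg _ huPm hu0) (not_lt.mpr hge0)
  -- positivity constant on E
  obtain ⟨m, hm0, hm⟩ : ∃ m : ℝ, 0 < m ∧ ∀ x : E, m * ‖x‖ ^ 2 ≤ B (f x) (f x) := by
    obtain ⟨m, hm0, hm⟩ := quad_pos_bound (E := E) (fun x => B' (f x) (f x))
      (((B'.continuous.comp f.continuous).clm_apply f.continuous))
      (by intro c x; simp [map_smul]; ring)
      (by intro x hx; show 0 < B' (f x) (f x); rw [hB']; exact hf1 x hx)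
    exact ⟨m, hm0, fun x => by rw [← hB']; exact hm x⟩
  -- negativity constant on Wm
  obtain ⟨cm, hcm0, hcm⟩ : ∃ cm : ℝ, 0 < cm ∧ ∀ v ∈ Wm, B v v ≤ -(cm * ‖v‖ ^ 2) := by
    obtain ⟨cm, hcm0, hcm⟩ := quad_pos_bound (E := Wm) (fun v => -(B' v v))
      (by
        have h1 : Continuous fun v : Wm => (v : V) := continuous_subtype_val
        exact ((B'.continuous.comp h1).clm_apply h1).neg)
      (by intro c v; push_cast; simp [map_smul]; ring)
      (by
        intro v hv
        have hv0 : (v : V) ≠ 0 := fun h => hv (Subtype.ext h)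
        have := hnegWm v v.2 hv0
        show 0 < -(B' (v : V) (v : V))
        rw [hB']
        linarith)
    refine ⟨cm, hcm0, fun v hv => ?_⟩
    have := hcm ⟨v, hv⟩
    rw [hB'] at this
    simp only [Submodule.coe_norm] at this
    linarith [this]
  -- linear retraction T with f (T δ) = projection of δ to W
  set P := W.linearProjOfIsCompl Wm hWcompl with hP
  set e := LinearEquiv.ofInjective F hinj with he
  set T : V →ₗ[ℝ] E := (e.symm : W →ₗ[ℝ] E) ∘ₗ P with hT
  have hFT : ∀ δ : V, F (T δ) = (P δ : V) := by
    intro δ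
    have h1 : F (e.symm (P δ)) = (e (e.symm (P δ)) : V) := by
      rw [he]
      rfl
    rw [hT]
    simpa [LinearEquiv.apply_symm_apply] using h1
  have hsub : ∀ δ : V, δ - F (T δ) ∈ Wm := by
    intro δ
    rw [hFT]
    have h1 := Submodule.projection_add_projection_eq_self hWcompl δ
    have h2 : δ - (P δ : V) = (Wm.linearProjOfIsCompl W hWcompl.symm δ : V) :=
      sub_eq_of_eq_add' h1.symm
    rw [h2]
    exact (Wm.linearProjOfIsCompl W hWcompl.symm δ).2
  set T' := LinearMap.toContinuousLinearMap T with hT'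
  set CT := ‖T'‖ with hCT
  have hCT0 : 0 ≤ CT := hCT ▸ norm_nonneg T'
  have hTle : ∀ δ : V, ‖T δ‖ ≤ CT * ‖δ‖ := by
    intro δ
    have := T'.le_opNorm δ
    exact this
  set Cf := ‖f‖ with hCf
  have hCf0 : 0 ≤ Cf := hCf ▸ norm_nonneg f
  -- radius bound for relevant (-2)-classes
  set R := Real.sqrt (8 / cm) with hR
  set SR := {δ : V | δ ∈ Λ ∧ B δ δ = -2 ∧ ‖δ‖ ≤ R} with hSR
  have hSRfin : SR.Finite := by
    have hd0 : DiscreteTopology (Submodule.span ℤ (Set.range b)) := inferInstance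
    have hd : DiscreteTopology ((Submodule.span ℤ (Set.range b) : Set V) : Set V) := hd0
    have hc : IsClosed ((Submodule.span ℤ (Set.range b) : Set V)) := by
      have := AddSubgroup.isClosed_of_discrete
        (H := (Submodule.span ℤ (Set.range b)).toAddSubgroup)
      simpa using this
    have hfin := Metric.finite_isBounded_inter_isClosed (K := Metric.closedBall (0 : V) R)
      (s := (Submodule.span ℤ (Set.range b) : Set V)) DiscreteTopology.isDiscrete Metric.isBounded_closedBall hc
    refine hfin.subset ?_
    rintro δ ⟨h1, h2, h3⟩
    rw [hΛ] at h1
    refine Set.mem_inter ?_ h1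
    simpa [Metric.mem_closedBall, dist_eq_norm] using h3
  -- witnesses of non-orthogonality for the finitely many relevant classes
  have hzw : ∀ δ ∈ SR, ∃ z : E, B δ (f z) ≠ 0 := fun δ hδ => hf2 δ hδ.1 hδ.2.1
  choose! zf hzf using hzw
  -- an ε₂ keeping the witnesses valid
  obtain ⟨ε₂, hε₂0, hε₂⟩ : ∃ ε > 0, ∀ δ ∈ SR, ∀ g : E →L[ℝ] V, ‖g - f‖ ≤ ε →
      B δ (g (zf δ)) ≠ 0 := by
    have key : ∀ δ ∈ SR, ∃ ε > 0, ∀ g : E →L[ℝ] V, ‖g - f‖ ≤ ε → B δ (g (zf δ)) ≠ 0 := by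
      intro δ hδ
      set c := |B δ (f (zf δ))| with hc
      have hc0 : 0 < c := abs_pos.mpr (hzf δ hδ)
      set A := CB * ‖δ‖ * ‖zf δ‖ with hA
      have hA0 : 0 ≤ A := by rw [hA]; positivity
      refine ⟨c / (2 * (A + 1)), by positivity, fun g hg => ?_⟩
      have hdiff : |B δ (g (zf δ)) - B δ (f (zf δ))| ≤ A * (c / (2 * (A + 1))) := by
        have h1 : B δ (g (zf δ)) - B δ (f (zf δ)) = B δ ((g - f) (zf δ)) := by
          simp [map_sub]
        rw [h1]
        have hz : ‖(g - f) (zf δ)‖ ≤ (c / (2 * (A + 1))) * ‖zf δ‖ :=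
          le_trans ((g - f).le_opNorm _) (mul_le_mul_of_nonneg_right hg (norm_nonneg _))
        have habs : |B δ ((g - f) (zf δ))| ≤ CB * ‖δ‖ * ((c / (2 * (A + 1))) * ‖zf δ‖) :=
          abs_mul_bound hCB0 (norm_nonneg _) (norm_nonneg _) le_rfl hz (hBle _ _)
        calc |B δ ((g - f) (zf δ))| ≤ CB * ‖δ‖ * ((c / (2 * (A + 1))) * ‖zf δ‖) := habs
          _ = A * (c / (2 * (A + 1))) := by rw [hA]; ring
      have hlt : A * (c / (2 * (A + 1))) < c := arith_lt hA0 hc0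
      intro h0
      rw [h0] at hdiff
      simp only [zero_sub, abs_neg] at hdiff
      rw [← hc] at hdiff
      linarith
    choose! εδ hεδ0 hεδ using key
    rcases hSRfin.toFinset.eq_empty_or_nonempty with hne | hne
    · refine ⟨1, one_pos, fun δ hδ => ?_⟩
      exfalso
      have : δ ∈ hSRfin.toFinset := hSRfin.mem_toFinset.mpr hδ
      rw [hne] at this
      simp at this
    · refine ⟨hSRfin.toFinset.inf' hne εδ, ?_, ?_⟩
      · exact (Finset.lt_inf'_iff hne).mpr
          (fun δ hδ => hεδ0 δ (hSRfin.mem_toFinset.mp hδ))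
      · intro δ hδ g hg
        refine hεδ δ hδ g (le_trans hg ?_)
        exact Finset.inf'_le _ (hSRfin.mem_toFinset.mpr hδ)
  -- choose the final ε
  set ε₀ := m * cm / (2 * (CB * CT * (2 * cm * Cf ^ 2 + 2 * m) + 1)) with hε₀
  have hε₀0 : 0 < ε₀ := by rw [hε₀]; positivity
  set ε₁ := min 1 (m / (2 * CB * Cf + CB + 1)) with hε₁
  have hε₁0 : 0 < ε₁ := by
    rw [hε₁]
    exact lt_min one_pos (by positivity)
  refine ⟨min ε₀ (min ε₁ ε₂), by positivity, ?_⟩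
  intro g hg
  rw [Metric.mem_ball, dist_eq_norm] at hg
  have hgε₀ : ‖g - f‖ ≤ ε₀ := le_of_lt (lt_of_lt_of_le hg (min_le_left _ _))
  have hgε₁ : ‖g - f‖ ≤ ε₁ :=
    le_of_lt (lt_of_lt_of_le hg (le_trans (min_le_right _ _) (min_le_left _ _)))
  have hgε₂ : ‖g - f‖ ≤ ε₂ :=
    le_of_lt (lt_of_lt_of_le hg (le_trans (min_le_right _ _) (min_le_right _ _)))
  set d := g - f with hd
  have hdle : ∀ x : E, ‖d x‖ ≤ ‖d‖ * ‖x‖ := fun x => d.le_opNorm x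
  have hdn : 0 ≤ ‖d‖ := norm_nonneg _
  constructor
  -- positive definiteness persists
  · intro x hx
    have hxn : (0 : ℝ) < ‖x‖ := norm_pos_iff.mpr hx
    have hgx : g x = f x + d x := by rw [hd]; simp
    have hexp : B (g x) (g x)
        = B (f x) (f x) + B (f x) (d x) + B (d x) (f x) + B (d x) (d x) := by
      rw [hgx]
      simp only [map_add, LinearMap.add_apply]
      ring
    have hfx : ‖f x‖ ≤ Cf * ‖x‖ := f.le_opNorm x
    have h1 : |B (f x) (d x)| ≤ CB * Cf * ‖d‖ * ‖x‖ ^ 2 := by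
      have := abs_mul_bound hCB0 (norm_nonneg (f x)) (norm_nonneg (d x)) hfx (hdle x)
        (hBle (f x) (d x))
      calc |B (f x) (d x)| ≤ CB * (Cf * ‖x‖) * (‖d‖ * ‖x‖) := this
        _ = CB * Cf * ‖d‖ * ‖x‖ ^ 2 := by ring
    have h2 : |B (d x) (f x)| ≤ CB * Cf * ‖d‖ * ‖x‖ ^ 2 := by
      have := abs_mul_bound hCB0 (norm_nonneg (d x)) (norm_nonneg (f x)) (hdle x) hfx
        (hBle (d x) (f x))
      calc |B (d x) (f x)| ≤ CB * (‖d‖ * ‖x‖) * (Cf * ‖x‖) := this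
        _ = CB * Cf * ‖d‖ * ‖x‖ ^ 2 := by ring
    have h3 : |B (d x) (d x)| ≤ CB * ‖d‖ ^ 2 * ‖x‖ ^ 2 := by
      have := abs_mul_bound hCB0 (norm_nonneg (d x)) (norm_nonneg (d x)) (hdle x) (hdle x)
        (hBle (d x) (d x))
      calc |B (d x) (d x)| ≤ CB * (‖d‖ * ‖x‖) * (‖d‖ * ‖x‖) := this
        _ = CB * ‖d‖ ^ 2 * ‖x‖ ^ 2 := by ring
    have hd1 : ‖d‖ ≤ 1 := le_trans hgε₁ (min_le_left _ _)
    have hd2 : ‖d‖ ≤ m / (2 * CB * Cf + CB + 1) := le_trans hgε₁ (min_le_right _ _)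
    have hd2' : ‖d‖ * (2 * CB * Cf + CB + 1) ≤ m := (le_div_iff₀ (by positivity)).mp hd2
    rw [hexp]
    exact arith_pos hCB0 hCf0 hdn hxn hm0 (hm x) h1 h2 h3 hd1 hd2'
  -- no (-2)-class becomes orthogonal
  · intro δ hδΛ hδ2
    by_contra hcon
    push_neg at hcon
    -- decompose δ
    set z₀ := T δ with hz₀
    set w := F z₀ with hw
    set v := δ - w with hv
    have hvWm : v ∈ Wm := hsub δ
    have hδwv : δ = w + v := by rw [hv]; abel
    have hvw : B v w = 0 := (hWmmem _).mp hvWm z₀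
    have hwv : B w v = 0 := by rw [hsymm]; exact hvw
    -- B w w from near-orthogonality
    have h0 : B δ (g z₀) = 0 := hcon z₀
    have hgz : g z₀ = f z₀ + d z₀ := by rw [hd]; simp
    have hww : B w w = -(B δ (d z₀)) := by
      have hδw : B δ w = B w w := by
        rw [hδwv, map_add, LinearMap.add_apply, hvw]
        ring
      have hbig : B δ (g z₀) = B w w + B δ (d z₀) := by
        rw [hgz, map_add, ← hδw]
        rfl
      rw [hbig] at h0
      linarith
    have hwwnn : 0 ≤ B w w := le_trans (by positivity) (hm z₀)
    have hdz : ‖d z₀‖ ≤ ε₀ * (CT * ‖δ‖) := by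
      calc ‖d z₀‖ ≤ ‖d‖ * ‖z₀‖ := hdle z₀
        _ ≤ ε₀ * (CT * ‖δ‖) := mul_le_mul hgε₀ (hTle δ) (norm_nonneg _) hε₀0.le
    have habs : |B δ (d z₀)| ≤ CB * ‖δ‖ * (ε₀ * (CT * ‖δ‖)) :=
      abs_mul_bound hCB0 (norm_nonneg _) (norm_nonneg _) le_rfl hdz (hBle _ _)
    have hwwle : B w w ≤ CB * ε₀ * CT * ‖δ‖ ^ 2 := by
      have h2 : -(B δ (d z₀)) ≤ CB * ‖δ‖ * (ε₀ * (CT * ‖δ‖)) :=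
        le_trans (neg_le_abs _) habs
      calc B w w = -(B δ (d z₀)) := hww
        _ ≤ CB * ‖δ‖ * (ε₀ * (CT * ‖δ‖)) := h2
        _ = CB * ε₀ * CT * ‖δ‖ ^ 2 := by ring
    -- bounds on the components
    have hwn : m * ‖w‖ ^ 2 ≤ Cf ^ 2 * B w w := by
      have h1 : ‖w‖ ≤ Cf * ‖z₀‖ := f.le_opNorm z₀
      exact arith_wn hm0 hCf0 (norm_nonneg w) (norm_nonneg z₀) h1 (hm z₀)
    have hvn : cm * ‖v‖ ^ 2 ≤ 2 + B w w := by
      have h1 : B v v = -2 - B w w := by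
        have hexp2 : B δ δ = B w w + B v v := by
          rw [hδwv]
          simp only [map_add, LinearMap.add_apply, hvw, hwv]
          ring
        rw [hδ2] at hexp2
        linarith
      have h2 := hcm v hvWm
      rw [h1] at h2
      linarith
    have hδn : ‖δ‖ ^ 2 ≤ 2 * ‖w‖ ^ 2 + 2 * ‖v‖ ^ 2 := by
      refine arith_sq ?_ (norm_nonneg δ)
      calc ‖δ‖ = ‖w + v‖ := by rw [← hδwv]
        _ ≤ ‖w‖ + ‖v‖ := norm_add_le w v
    -- conclude ‖δ‖ ≤ R
    have hεbound : ε₀ * (CB * CT * (2 * cm * Cf ^ 2 + 2 * m)) ≤ m * cm / 2 := by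
      rw [hε₀]
      exact arith_eps (by positivity) (by positivity)
    have hkey : cm * ‖δ‖ ^ 2 ≤ 8 :=
      arith_key hm0 hcm0 hCB0 hCT0 hCf0 hε₀0.le hwwnn hwwle hwn hvn hδn hεbound
    have hδR : ‖δ‖ ≤ R := by
      have h8 : ‖δ‖ ^ 2 ≤ 8 / cm := (le_div_iff₀ hcm0).mpr (by linarith)
      rw [hR]
      calc ‖δ‖ = Real.sqrt (‖δ‖ ^ 2) := (Real.sqrt_sq (norm_nonneg δ)).symm
        _ ≤ Real.sqrt (8 / cm) := Real.sqrt_le_sqrt h8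
    -- δ is one of the finitely many classes, contradiction with the witness
    exact hε₂ δ ⟨hδΛ, hδ2, hδR⟩ g hgε₂ (hcon (zf δ))
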